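/- arXiv:2505.10947 — 6 statements merged into one kernel-verified Lean document; each statement's English description precedes it below -/
import Mathlib

section
/- Let f : ℝⁿ → ℝⁿ be Lipschitz continuous with f(0) = 0, and let V : ℝⁿ → ℝ be continuous with V(0) = 0 and V(x) > 0 for all x ≠ 0. Let M ≥ 1 be an integer and let σ₁, …, σ_M : ℝⁿ → ℝ be nonnegative state-dependent weights satisfying (1/M)·∑_{i=1}^M σ_i(x) ≥ 1 for all x. Suppose that for every x ≠ 0, (1/M)·∑_{i=1}^M σ_i(x)·V(f^[i](x)) < V(x), where f^[i] denotes the i-fold iterate of f. Then the origin is an asymptotically stable equilibrium of the discrete-time system x_{k+1} = f(x_k): (i) for every ε > 0 there exists δ > 0 such that ‖x₀‖ < δ implies ‖f^[k](x₀)‖ < ε for all k ≥ 0, and (ii) there exists δ₀ > 0 such that ‖x₀‖ < δ₀ implies f^[k](x₀) → 0 as k → ∞. -/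
/-- (Asymptotic stability via a generalized Lyapunov function.)
Let `f : ℝⁿ → ℝⁿ` be Lipschitz with `f(0) = 0`, `V : ℝⁿ → ℝ` continuous, positive
definite.  If there are `M ≥ 1` and nonnegative state-dependent weights
`σ₁, …, σ_M : ℝⁿ → ℝ` with average at least `1` such that
`(1/M)·∑_{i=1}^M σ_i(x)·V(f^[i](x)) < V(x)` for all `x ≠ 0`, then the origin is an
asymptotically stable equilibrium of `x_{k+1} = f(x_k)`: (i) Lyapunov stability, and
(ii) local attractivity. -/
theorem generalized_lyapunov_asymptotic_stability
    (n : ℕ) (f : EuclideanSpace ℝ (Fin n) → EuclideanSpace ℝ (Fin n))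
    (hfLip : ∃ L : NNReal, LipschitzWith L f) (hf0 : f 0 = 0)
    (V : EuclideanSpace ℝ (Fin n) → ℝ) (hVcont : Continuous V)
    (hV0 : V 0 = 0) (hVpos : ∀ x, x ≠ 0 → 0 < V x)
    (M : ℕ) (hM : 1 ≤ M)
    (σ : ℕ → EuclideanSpace ℝ (Fin n) → ℝ)
    (hσ : ∀ i ∈ Finset.Icc 1 M, ∀ x, 0 ≤ σ i x)
    (hσavg : ∀ x, 1 ≤ (1 / (M : ℝ)) * ∑ i ∈ Finset.Icc 1 M, σ i x)
    (hdec : ∀ x, x ≠ 0 →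
      (1 / (M : ℝ)) * ∑ i ∈ Finset.Icc 1 M, σ i x * V (f^[i] x) < V x) :
    (∀ ε > (0 : ℝ), ∃ δ > (0 : ℝ), ∀ x₀, ‖x₀‖ < δ → ∀ k, ‖f^[k] x₀‖ < ε) ∧
    (∃ δ₀ > (0 : ℝ), ∀ x₀, ‖x₀‖ < δ₀ →
      Filter.Tendsto (fun k => f^[k] x₀) Filter.atTop (nhds 0)) := by
  obtain ⟨L, hLip⟩ := hfLip
  have hM0 : (0:ℝ) < (M:ℝ) := by exact_mod_cast hM
  have hf0' : ∀ i : ℕ, f^[i] 0 = 0 := fun i => Function.iterate_fixed hf0 i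
  have hVnn : ∀ x, 0 ≤ V x := by
    intro x
    rcases eq_or_ne x 0 with h | h
    · rw [h, hV0]
    · exact (hVpos x h).le
  -- Claim A: for every nonzero x some iterate within M steps strictly decreases V
  have key : ∀ x, x ≠ 0 → ∃ i ∈ Finset.Icc 1 M, V (f^[i] x) < V x := by
    intro x hx
    by_contra h
    push_neg at h
    have hsum : (∑ i ∈ Finset.Icc 1 M, σ i x) * V x
        ≤ ∑ i ∈ Finset.Icc 1 M, σ i x * V (f^[i] x) := by
      rw [Finset.sum_mul]
      refine Finset.sum_le_sum fun i hi => ?_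
      exact mul_le_mul_of_nonneg_left (h i hi) (hσ i hi x)
    have h1 := hσavg x
    have h2 := hdec x hx
    have hVx := hVpos x hx
    have h3 : (1 / (M:ℝ)) * ((∑ i ∈ Finset.Icc 1 M, σ i x) * V x)
        ≤ (1 / (M:ℝ)) * ∑ i ∈ Finset.Icc 1 M, σ i x * V (f^[i] x) :=
      mul_le_mul_of_nonneg_left hsum (by positivity)
    nlinarith
  -- the greedy one-block descent map T
  have hstep : ∀ x, ∃ i, i ∈ Finset.Icc 1 M ∧
      ∀ j ∈ Finset.Icc 1 M, V (f^[i] x) ≤ V (f^[j] x) := by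
    intro x
    obtain ⟨i, hi, hmin⟩ := Finset.exists_min_image (Finset.Icc 1 M)
      (fun i => V (f^[i] x)) ⟨1, by simp [hM]⟩
    exact ⟨i, hi, hmin⟩
  choose step hstepmem hstepmin using hstep
  have hstep1 : ∀ x, 1 ≤ step x := fun x => (Finset.mem_Icc.1 (hstepmem x)).1
  have hstepM : ∀ x, step x ≤ M := fun x => (Finset.mem_Icc.1 (hstepmem x)).2
  set T : EuclideanSpace ℝ (Fin n) → EuclideanSpace ℝ (Fin n) :=
    fun x => f^[step x] x with hT_def
  have hT_le : ∀ x, V (T x) ≤ V x := by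
    intro x
    rcases eq_or_ne x 0 with h | h
    · rw [h]
      show V (f^[step 0] 0) ≤ V 0
      rw [hf0']
    · obtain ⟨i, hi, hlt⟩ := key x h
      exact le_trans (hstepmin x i hi) hlt.le
  -- cumulative times
  set s : EuclideanSpace ℝ (Fin n) → ℕ → ℕ :=
    fun x₀ j => ∑ i ∈ Finset.range j, step (T^[i] x₀) with hs_def
  have hs0 : ∀ x₀, s x₀ 0 = 0 := fun _ => Finset.sum_range_zero _
  have hs_succ : ∀ x₀ (j : ℕ), s x₀ (j+1) = s x₀ j + step (T^[j] x₀) :=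
    fun x₀ j => Finset.sum_range_succ _ _
  have hys : ∀ x₀ (j : ℕ), T^[j] x₀ = f^[s x₀ j] x₀ := by
    intro x₀ j
    induction j with
    | zero => simp [hs0]
    | succ j ih =>
      rw [Function.iterate_succ_apply', hs_succ]
      show f^[step (T^[j] x₀)] (T^[j] x₀) = _
      rw [ih, Nat.add_comm (s x₀ j), Function.iterate_add_apply]
  have hcover : ∀ x₀ (k : ℕ), ∃ j, s x₀ j ≤ k ∧ k < s x₀ (j+1) := by
    intro x₀ k
    induction k with
    | zero =>
      refine ⟨0, by rw [hs0], ?_⟩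
      rw [hs_succ, hs0]
      have := hstep1 (T^[0] x₀)
      omega
    | succ k ih =>
      obtain ⟨j, hj1, hj2⟩ := ih
      rcases Nat.lt_or_ge (k+1) (s x₀ (j+1)) with h | h
      · exact ⟨j, by omega, h⟩
      · refine ⟨j+1, by omega, ?_⟩
        rw [hs_succ x₀ (j+1)]
        have := hstep1 (T^[j+1] x₀)
        omega
  -- Lipschitz iterate bound
  set K : ℝ := (max 1 (L:ℝ)) ^ M with hK_def
  have hK1 : (1:ℝ) ≤ K := one_le_pow₀ (le_max_left _ _)
  have hK0 : (0:ℝ) < K := lt_of_lt_of_le one_pos hK1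
  have iter_bound : ∀ i : ℕ, i ≤ M → ∀ x, ‖f^[i] x‖ ≤ K * ‖x‖ := by
    intro i hi x
    have h1 := (hLip.iterate i).dist_le_mul x 0
    rw [hf0' i, dist_zero_right, dist_zero_right] at h1
    have h2 : ((L^i : NNReal) : ℝ) ≤ K := by
      push_cast
      calc (L:ℝ)^i ≤ (max 1 (L:ℝ))^i :=
            pow_le_pow_left₀ L.coe_nonneg (le_max_right _ _) i
        _ ≤ K := pow_le_pow_right₀ (le_max_left _ _) hi
    exact h1.trans (mul_le_mul_of_nonneg_right h2 (norm_nonneg x))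
  -- minima of V on annuli
  have annulus : ∀ r R : ℝ, 0 < r →
      ∃ c > (0:ℝ), ∀ x, r ≤ ‖x‖ → ‖x‖ ≤ R → c ≤ V x := by
    intro r R hr
    set A : Set (EuclideanSpace ℝ (Fin n)) :=
      Metric.closedBall 0 R \ Metric.ball 0 r with hA_def
    have hmemA : ∀ x, r ≤ ‖x‖ → ‖x‖ ≤ R → x ∈ A := fun x h1 h2 =>
      ⟨mem_closedBall_zero_iff.2 h2,
        fun hx => absurd (mem_ball_zero_iff.1 hx) (not_lt.2 h1)⟩
    have hAc : IsCompact A := (isCompact_closedBall _ _).diff Metric.isOpen_ball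
    rcases A.eq_empty_or_nonempty with hA | hA
    · exact ⟨1, one_pos, fun x h1 h2 => absurd (hmemA x h1 h2)
        (by rw [hA]; exact Set.notMem_empty x)⟩
    · obtain ⟨x₀, hx₀A, hmin⟩ := hAc.exists_isMinOn hA hVcont.continuousOn
      refine ⟨V x₀, ?_, fun x h1 h2 => isMinOn_iff.1 hmin x (hmemA x h1 h2)⟩
      refine hVpos x₀ fun h => ?_
      have := hx₀A.2
      rw [h] at this
      exact this (mem_ball_zero_iff.2 (by simpa using hr))
  -- continuity of V at zero
  have hVat0 : ∀ c : ℝ, 0 < c → ∃ δ₁ > (0:ℝ), ∀ x, ‖x‖ < δ₁ → V x < c := by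
    intro c hc
    obtain ⟨δ₁, hδ₁, h⟩ := Metric.continuousAt_iff.1
      (hVcont.continuousAt : ContinuousAt V (0 : EuclideanSpace ℝ (Fin n))) c hc
    refine ⟨δ₁, hδ₁, fun x hx => ?_⟩
    have := h (by rwa [dist_zero_right])
    rw [hV0, dist_zero_right] at this
    exact lt_of_le_of_lt (le_abs_self _) this
  -- Stability
  have stab : ∀ ε > (0:ℝ), ∃ δ > (0:ℝ), ∀ x₀, ‖x₀‖ < δ → ∀ k, ‖f^[k] x₀‖ < ε := by
    intro ε hε
    set r : ℝ := ε / (2 * K) with hr_def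
    have hr : 0 < r := by positivity
    have hKr : K * r = ε / 2 := by
      rw [hr_def]; field_simp
    obtain ⟨c, hc, hcmin⟩ := annulus r ε hr
    obtain ⟨δ₁, hδ₁, hδ₁prop⟩ := hVat0 c hc
    refine ⟨min δ₁ r, lt_min hδ₁ hr, fun x₀ hx₀ k => ?_⟩
    have inv : ∀ j, V (T^[j] x₀) < c ∧ ‖T^[j] x₀‖ < r := by
      intro j
      induction j with
      | zero =>
        exact ⟨hδ₁prop x₀ (lt_of_lt_of_le hx₀ (min_le_left _ _)),
          lt_of_lt_of_le hx₀ (min_le_right _ _)⟩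
      | succ j ih =>
        obtain ⟨ihV, ihn⟩ := ih
        rw [Function.iterate_succ_apply']
        have hVs : V (T (T^[j] x₀)) < c := lt_of_le_of_lt (hT_le _) ihV
        refine ⟨hVs, ?_⟩
        have hn : ‖T (T^[j] x₀)‖ ≤ K * ‖T^[j] x₀‖ :=
          iter_bound _ (hstepM _) _
        have hnε : ‖T (T^[j] x₀)‖ ≤ ε := by
          calc ‖T (T^[j] x₀)‖ ≤ K * ‖T^[j] x₀‖ := hn
            _ ≤ K * r := mul_le_mul_of_nonneg_left ihn.le hK0.le
            _ = ε / 2 := hKr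
            _ ≤ ε := by linarith
        by_contra hge
        exact absurd (hcmin _ (not_lt.1 hge) hnε) (not_le.2 hVs)
    obtain ⟨j, hj1, hj2⟩ := hcover x₀ k
    have hkm : k - s x₀ j ≤ M := by
      have h1 := hs_succ x₀ j
      have h2 := hstepM (T^[j] x₀)
      omega
    have hfk : f^[k] x₀ = f^[k - s x₀ j] (T^[j] x₀) := by
      rw [hys, ← Function.iterate_add_apply]
      congr 1
      omega
    calc ‖f^[k] x₀‖ = ‖f^[k - s x₀ j] (T^[j] x₀)‖ := by rw [hfk]
      _ ≤ K * ‖T^[j] x₀‖ := iter_bound _ hkm _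
      _ < K * r := mul_lt_mul_of_pos_left (inv j).2 hK0
      _ = ε / 2 := hKr
      _ < ε := by linarith
  refine ⟨stab, ?_⟩
  -- Attractivity
  obtain ⟨δ₀, hδ₀, hδ₀prop⟩ := stab 1 one_pos
  refine ⟨δ₀, hδ₀, fun x₀ hx₀ => ?_⟩
  have hbd : ∀ k, ‖f^[k] x₀‖ < 1 := hδ₀prop x₀ hx₀
  have hsmall : ∀ δ > (0:ℝ), ∃ N, ‖f^[N] x₀‖ < δ := by
    intro δ hδ
    by_contra h
    push_neg at h
    obtain ⟨c, hc, hcmin⟩ := annulus δ 1 hδ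
    have hck : ∀ k, c ≤ V (f^[k] x₀) := fun k => hcmin _ (h k) (hbd k).le
    set b : ℕ → ℝ := fun j => V (T^[j] x₀) with hb_def
    have hanti : Antitone b := antitone_nat_of_succ_le fun j => by
      show V (T^[j+1] x₀) ≤ V (T^[j] x₀)
      rw [Function.iterate_succ_apply']
      exact hT_le _
    have hbdd : BddBelow (Set.range b) := ⟨0, fun y ⟨j, hj⟩ => hj ▸ hVnn _⟩
    have htend : Filter.Tendsto b Filter.atTop (nhds (⨅ j, b j)) :=
      tendsto_atTop_ciInf hanti hbdd
    set ℓ : ℝ := ⨅ j, b j with hℓ_def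
    have hbℓ : ∀ j, ℓ ≤ b j := fun j => ciInf_le hbdd j
    have hℓc : c ≤ ℓ := le_ciInf fun j => by
      show c ≤ V (T^[j] x₀)
      rw [hys]
      exact hck _
    have hcpt : IsCompact (Metric.closedBall (0:EuclideanSpace ℝ (Fin n)) 1) :=
      isCompact_closedBall _ _
    have hmem : ∀ j, T^[j] x₀ ∈ Metric.closedBall (0:EuclideanSpace ℝ (Fin n)) 1 :=
      fun j => mem_closedBall_zero_iff.2 (by rw [hys]; exact (hbd _).le)
    obtain ⟨z, hz, φ, hφ, hφt⟩ := hcpt.tendsto_subseq hmem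
    have hVz : V z = ℓ := by
      have h1 : Filter.Tendsto (fun m => V (T^[φ m] x₀)) Filter.atTop (nhds (V z)) :=
        (hVcont.tendsto z).comp hφt
      have h2 : Filter.Tendsto (fun m => b (φ m)) Filter.atTop (nhds ℓ) :=
        htend.comp hφ.tendsto_atTop
      exact tendsto_nhds_unique h1 h2
    have hz0 : z ≠ 0 := by
      intro hzz
      rw [hzz, hV0] at hVz
      linarith
    obtain ⟨i, hi, hlt⟩ := key z hz0
    have hfcont : Continuous (f^[i]) := (hLip.iterate i).continuous
    have h1 : Filter.Tendsto (fun m => V (f^[i] (T^[φ m] x₀))) Filter.atTop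
        (nhds (V (f^[i] z))) := ((hVcont.comp hfcont).tendsto z).comp hφt
    have h2 : ∀ m, ℓ ≤ V (f^[i] (T^[φ m] x₀)) := by
      intro m
      refine le_trans (hbℓ (φ m + 1)) ?_
      show V (T^[φ m + 1] x₀) ≤ _
      rw [Function.iterate_succ_apply']
      exact hstepmin (T^[φ m] x₀) i hi
    have := ge_of_tendsto h1 (Filter.Eventually.of_forall h2)
    rw [hVz] at hlt
    linarith
  rw [Metric.tendsto_atTop]
  intro ε hε
  obtain ⟨δ, hδ, hδprop⟩ := stab ε hε
  obtain ⟨N, hN⟩ := hsmall δ hδ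
  refine ⟨N, fun k hk => ?_⟩
  rw [dist_zero_right]
  have := hδprop (f^[N] x₀) hN (k - N)
  rwa [← Function.iterate_add_apply, Nat.sub_add_cancel hk] at this
end

section
/- Let f : ℝⁿ → ℝⁿ and V : ℝⁿ → ℝ be arbitrary functions, let M ≥ 1 be an integer, and let σ₁, …, σ_M be real numbers with ∑_{i=1}^M σ_i = M. Define a_j := (1/M)·∑_{i=j+1}^M σ_i for j = 0, …, M−1, and define W(x) := ∑_{j=0}^{M−1} a_j · V(f^[j](x)), where f^[j] denotes the j-fold iterate of f. Then for every x ∈ ℝⁿ: W(f(x)) − W(x) = (1/M)·∑_{i=1}^M σ_i·V(f^[i](x)) − V(x). -/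
/-- (Telescoping identity.)  Let `f : ℝⁿ → ℝⁿ` and `V : ℝⁿ → ℝ` be
arbitrary, `M ≥ 1`, and `σ₁, …, σ_M` reals with `∑_{i=1}^M σ_i = M`.  With
`a_j := (1/M)·∑_{i=j+1}^M σ_i` for `j = 0, …, M−1` and
`W(x) := ∑_{j=0}^{M−1} a_j·V(f^[j](x))`, one has for every `x`:
`W(f(x)) − W(x) = (1/M)·∑_{i=1}^M σ_i·V(f^[i](x)) − V(x)`. -/
theorem telescoping_identity_W
    (n : ℕ) (f : EuclideanSpace ℝ (Fin n) → EuclideanSpace ℝ (Fin n))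
    (V : EuclideanSpace ℝ (Fin n) → ℝ)
    (M : ℕ) (hM : 1 ≤ M)
    (σ : ℕ → ℝ) (hσsum : ∑ i ∈ Finset.Icc 1 M, σ i = (M : ℝ))
    (a : ℕ → ℝ) (ha : ∀ j, a j = (1 / (M : ℝ)) * ∑ i ∈ Finset.Icc (j + 1) M, σ i)
    (W : EuclideanSpace ℝ (Fin n) → ℝ)
    (hW : ∀ x, W x = ∑ j ∈ Finset.range M, a j * V (f^[j] x)) :
    ∀ x, W (f x) - W x =
      (1 / (M : ℝ)) * ∑ i ∈ Finset.Icc 1 M, σ i * V (f^[i] x) - V x := by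
  intro x
  have hM0 : (M : ℝ) ≠ 0 := by
    exact Nat.cast_ne_zero.mpr (by omega)
  have ha0 : a 0 = 1 := by
    rw [ha]; simp only [Nat.zero_add, hσsum]; field_simp
  have haM : a M = 0 := by
    rw [ha, Finset.Icc_eq_empty (by omega), Finset.sum_empty, mul_zero]
  have hstep : ∀ i < M, a i - a (i + 1) = (1 / (M : ℝ)) * σ (i + 1) := by
    intro i hi
    rw [ha, ha]
    have : Finset.Icc (i + 1) M = insert (i + 1) (Finset.Icc (i + 2) M) := by
      ext k; simp; omega
    rw [this, Finset.sum_insert (by simp)]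
    ring
  -- rewrite the RHS Icc sum as a range sum
  have hIcc : ∑ i ∈ Finset.Icc 1 M, σ i * V (f^[i] x)
      = ∑ i ∈ Finset.range M, σ (i + 1) * V (f^[i + 1] x) := by
    rw [← Finset.Ico_add_one_right_eq_Icc, Finset.sum_Ico_eq_sum_range]
    simp [add_comm 1]
  have hshift : ∑ j ∈ Finset.range M, a (j + 1) * V (f^[j + 1] x)
      = ∑ j ∈ Finset.range M, a j * V (f^[j] x) + a M * V (f^[M] x) - a 0 * V x := by
    have h1 : ∑ j ∈ Finset.range (M + 1), a j * V (f^[j] x)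
        = ∑ j ∈ Finset.range M, a (j + 1) * V (f^[j + 1] x) + a 0 * V (f^[0] x) :=
      Finset.sum_range_succ' _ _
    rw [Finset.sum_range_succ] at h1
    simp only [Function.iterate_zero_apply] at h1
    linarith
  rw [hW (f x), hW x, hIcc, Finset.mul_sum]
  have hiter : ∀ j, V (f^[j] (f x)) = V (f^[j + 1] x) := by
    intro j; rw [Function.iterate_succ_apply]
  simp only [hiter]
  have hsum : ∑ i ∈ Finset.range M, (1 / (M : ℝ)) * (σ (i + 1) * V (f^[i + 1] x))
      = ∑ i ∈ Finset.range M, (a i * V (f^[i + 1] x) - a (i + 1) * V (f^[i + 1] x)) := by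
    apply Finset.sum_congr rfl
    intro i hi
    rw [← sub_mul, hstep i (Finset.mem_range.mp hi)]
    ring
  rw [hsum, Finset.sum_sub_distrib, hshift, ha0, haM]
  ring
end

section
/- Let f : ℝⁿ → ℝⁿ with f(0) = 0, and let V : ℝⁿ → ℝ satisfy V(x) ≥ 0 for all x, V(0) = 0, and V(x) > 0 for all x ≠ 0. Let M ≥ 1 be an integer and σ₁, …, σ_M ≥ 0 with ∑_{i=1}^M σ_i = M, and suppose that for every x ≠ 0: (1/M)·∑_{i=1}^M σ_i·V(f^[i](x)) < V(x). Define a_j := (1/M)·∑_{i=j+1}^M σ_i for j = 0, …, M−1 and W(x) := ∑_{j=0}^{M−1} a_j·V(f^[j](x)). Then W is a classical Lyapunov function for the system x_{k+1} = f(x_k): W(0) = 0, W(x) ≥ V(x) > 0 for all x ≠ 0, and W(f(x)) − W(x) < 0 for all x ≠ 0. -/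
/-- (Explicit construction of a classical Lyapunov function.)
Let `f : ℝⁿ → ℝⁿ` with `f(0) = 0`, and let `V : ℝⁿ → ℝ` be nonnegative, zero at the
origin and positive elsewhere.  Let `M ≥ 1`, `σ₁, …, σ_M ≥ 0` with `∑ σ_i = M`, and
suppose the strict generalized `M`-step decrease
`(1/M)·∑_{i=1}^M σ_i·V(f^[i](x)) < V(x)` holds for every `x ≠ 0`.  With
`a_j := (1/M)·∑_{i=j+1}^M σ_i` and `W(x) := ∑_{j=0}^{M−1} a_j·V(f^[j](x))`, the
function `W` is a classical Lyapunov function: `W(0) = 0`, `W(x) ≥ V(x) > 0` for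
`x ≠ 0`, and `W(f(x)) − W(x) < 0` for `x ≠ 0`. -/
theorem classical_lyapunov_from_generalized
    (n : ℕ) (f : EuclideanSpace ℝ (Fin n) → EuclideanSpace ℝ (Fin n)) (hf0 : f 0 = 0)
    (V : EuclideanSpace ℝ (Fin n) → ℝ)
    (hVnonneg : ∀ x, 0 ≤ V x) (hV0 : V 0 = 0) (hVpos : ∀ x, x ≠ 0 → 0 < V x)
    (M : ℕ) (hM : 1 ≤ M)
    (σ : ℕ → ℝ) (hσ : ∀ i ∈ Finset.Icc 1 M, 0 ≤ σ i)
    (hσsum : ∑ i ∈ Finset.Icc 1 M, σ i = (M : ℝ))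
    (hdec : ∀ x, x ≠ 0 →
      (1 / (M : ℝ)) * ∑ i ∈ Finset.Icc 1 M, σ i * V (f^[i] x) < V x)
    (a : ℕ → ℝ) (ha : ∀ j, a j = (1 / (M : ℝ)) * ∑ i ∈ Finset.Icc (j + 1) M, σ i)
    (W : EuclideanSpace ℝ (Fin n) → ℝ)
    (hW : ∀ x, W x = ∑ j ∈ Finset.range M, a j * V (f^[j] x)) :
    W 0 = 0 ∧
    (∀ x, x ≠ 0 → V x ≤ W x ∧ 0 < V x) ∧
    (∀ x, x ≠ 0 → W (f x) - W x < 0) := by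
  have hMR : (0:ℝ) < (M:ℝ) := by exact_mod_cast hM
  have hMne : (M:ℝ) ≠ 0 := ne_of_gt hMR
  have ha0 : a 0 = 1 := by
    rw [ha 0]; simp only [Nat.zero_add, hσsum]; field_simp
  have haM : a M = 0 := by
    have he : Finset.Icc (M+1) M = (∅ : Finset ℕ) := by
      apply Finset.Icc_eq_empty; omega
    rw [ha M, he]; simp
  have hanonneg : ∀ j, 0 ≤ a j := by
    intro j
    rw [ha j]
    apply mul_nonneg (by positivity)
    apply Finset.sum_nonneg
    intro i hi
    obtain ⟨h1, h2⟩ := Finset.mem_Icc.mp hi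
    exact hσ i (Finset.mem_Icc.mpr ⟨by omega, h2⟩)
  have hiter0 : ∀ j : ℕ, f^[j] (0 : EuclideanSpace ℝ (Fin n)) = 0 :=
    fun j => Function.iterate_fixed hf0 j
  have hstep : ∀ j, j < M → a j = a (j + 1) + (1 / (M:ℝ)) * σ (j + 1) := by
    intro j hj
    rw [ha j, ha (j+1)]
    have hins : Finset.Icc (j+1) M = insert (j+1) (Finset.Icc (j+2) M) := by
      ext k
      simp only [Finset.mem_Icc, Finset.mem_insert]
      omega
    rw [hins, Finset.sum_insert (by simp)]
    ring
  refine ⟨?_, ?_, ?_⟩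
  · rw [hW]
    apply Finset.sum_eq_zero
    intro j _
    rw [hiter0 j, hV0, mul_zero]
  · intro x hx
    refine ⟨?_, hVpos x hx⟩
    rw [hW]
    have h0mem : 0 ∈ Finset.range M := Finset.mem_range.mpr (by omega)
    calc V x = a 0 * V (f^[0] x) := by simp [ha0]
      _ ≤ ∑ j ∈ Finset.range M, a j * V (f^[j] x) :=
        Finset.single_le_sum (f := fun j => a j * V (f^[j] x))
          (fun j _ => mul_nonneg (hanonneg j) (hVnonneg _)) h0mem
  · intro x hx
    have key : W (f x) - W x =
        (1 / (M:ℝ)) * ∑ i ∈ Finset.Icc 1 M, σ i * V (f^[i] x) - V x := by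
      have hWf : W (f x) = ∑ j ∈ Finset.range M, a j * V (f^[j+1] x) := by
        rw [hW]
        exact Finset.sum_congr rfl fun j _ => by
          rw [Function.iterate_succ_apply]
      have hsplit : ∀ j ∈ Finset.range M,
          a j * V (f^[j+1] x)
            = a (j+1) * V (f^[j+1] x) + (1/(M:ℝ)) * (σ (j+1) * V (f^[j+1] x)) := by
        intro j hj
        rw [hstep j (Finset.mem_range.mp hj)]
        ring
      rw [hWf, Finset.sum_congr rfl hsplit, Finset.sum_add_distrib, ← Finset.mul_sum]
      have hshift : ∑ j ∈ Finset.range M, a (j+1) * V (f^[j+1] x)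
          = ∑ j ∈ Finset.range M, a j * V (f^[j] x) - a 0 * V x := by
        have h1 := Finset.sum_range_succ' (fun j => a j * V (f^[j] x)) M
        have h2 := Finset.sum_range_succ (fun j => a j * V (f^[j] x)) M
        simp only [Function.iterate_zero_apply] at h1 h2
        rw [haM] at h2
        simp only [zero_mul, add_zero] at h2
        linarith [h1, h2]
      have hIcc : ∑ i ∈ Finset.Icc 1 M, σ i * V (f^[i] x)
          = ∑ j ∈ Finset.range M, σ (j+1) * V (f^[j+1] x) := by
        rw [← Finset.Ico_add_one_right_eq_Icc, Finset.sum_Ico_eq_sum_range]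
        simp [add_comm 1]
      rw [hshift, hIcc, hW, ha0]
      ring
    rw [key]
    linarith [hdec x hx]
end

section
/- Let A be a real n×n matrix, B a real n×m matrix, Q a real symmetric positive semidefinite n×n matrix, R a real symmetric positive semidefinite m×m matrix, γ ∈ (0,1], K a real m×n matrix, F := A + BK, and P_γ a real symmetric n×n matrix satisfying the closed-loop Bellman identity P_γ = Q + KᵀRK + γ·FᵀP_γF. Let ϖ > 0 and let S₀, S₁ be real symmetric n×n matrices such that the block matrix [AᵀS₀A − S₀ + S₁ − ϖQ , AᵀS₀B ; BᵀS₀A , BᵀS₀B − ϖR] is negative semidefinite and the matrix (1/ϖ)·S₁ − (1/γ − 1)·P_γ is positive definite. Then the function V(x) := xᵀ(P_γ + (1/ϖ)·S₀)x satisfies the strict classical one-step Lyapunov decrease along the closed loop: V(Fx) − V(x) < 0 for every x ≠ 0. -/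
open Matrix

lemma dot_tmul {n k l : ℕ} (M : Matrix (Fin n) (Fin k) ℝ) (W : Matrix (Fin n) (Fin n) ℝ)
    (L : Matrix (Fin n) (Fin l) ℝ) (x : Fin k → ℝ) (y : Fin l → ℝ) :
    x ⬝ᵥ (Mᵀ * W * L).mulVec y = M.mulVec x ⬝ᵥ W.mulVec (L.mulVec y) := by
  rw [← mulVec_mulVec, ← mulVec_mulVec, dotProduct_mulVec, vecMul_transpose]

/-- (Classical one-step Lyapunov LMI result for discounted LQR.)
With `F = A + BK` the closed loop and `P_γ` solving the closed-loop Bellman identity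
`P_γ = Q + KᵀRK + γ·FᵀP_γF`, if the block matrix
`[AᵀS₀A − S₀ + S₁ − ϖQ , AᵀS₀B ; BᵀS₀A , BᵀS₀B − ϖR]` is negative semidefinite and
`(1/ϖ)·S₁ − (1/γ − 1)·P_γ` is positive definite, then the function
`V(x) = xᵀ(P_γ + (1/ϖ)·S₀)x` satisfies `V(Fx) − V(x) < 0` for every `x ≠ 0`. -/
theorem classical_lqr_lmi_decrease
    (n m : ℕ)
    (A : Matrix (Fin n) (Fin n) ℝ) (B : Matrix (Fin n) (Fin m) ℝ)
    (Q : Matrix (Fin n) (Fin n) ℝ) (hQ : Q.PosSemidef)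
    (R : Matrix (Fin m) (Fin m) ℝ) (hR : R.PosSemidef)
    (γ : ℝ) (hγ0 : 0 < γ) (hγ1 : γ ≤ 1)
    (K : Matrix (Fin m) (Fin n) ℝ)
    (F : Matrix (Fin n) (Fin n) ℝ) (hF : F = A + B * K)
    (Pγ : Matrix (Fin n) (Fin n) ℝ) (hPγsymm : Pγ.IsSymm)
    (hbellman : Pγ = Q + Kᵀ * R * K + γ • (Fᵀ * Pγ * F))
    (ϖ : ℝ) (hϖ : 0 < ϖ)
    (S₀ S₁ : Matrix (Fin n) (Fin n) ℝ) (hS₀symm : S₀.IsSymm) (hS₁symm : S₁.IsSymm)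
    (hlmi : (-(Matrix.fromBlocks
        (Aᵀ * S₀ * A - S₀ + S₁ - ϖ • Q) (Aᵀ * S₀ * B)
        (Bᵀ * S₀ * A) (Bᵀ * S₀ * B - ϖ • R))).PosSemidef)
    (hpd : ((1 / ϖ) • S₁ - (1 / γ - 1) • Pγ).PosDef) :
    ∀ x : Fin n → ℝ, x ≠ 0 →
      F.mulVec x ⬝ᵥ (Pγ + (1 / ϖ) • S₀).mulVec (F.mulVec x)
        - x ⬝ᵥ (Pγ + (1 / ϖ) • S₀).mulVec x < 0 := by
  intro x hx
  set Fx := F.mulVec x with hFx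
  set Kx := K.mulVec x with hKx
  set Ax := A.mulVec x with hAx
  have hFxdef : Fx = Ax + B.mulVec Kx := by
    rw [hFx, hF, add_mulVec, mulVec_mulVec]
  -- scalar quantities
  set a := x ⬝ᵥ Pγ.mulVec x with ha
  set f := Fx ⬝ᵥ Pγ.mulVec Fx with hf
  set q := x ⬝ᵥ Q.mulVec x with hq
  set r := Kx ⬝ᵥ R.mulVec Kx with hr
  set s0x := x ⬝ᵥ S₀.mulVec x with hs0x
  set s0f := Fx ⬝ᵥ S₀.mulVec Fx with hs0f
  set s1 := x ⬝ᵥ S₁.mulVec x with hs1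
  -- Bellman identity in scalar form : a = q + r + γ * f
  have hbell : a = q + r + γ * f := by
    have := congrArg (fun M : Matrix (Fin n) (Fin n) ℝ => x ⬝ᵥ M.mulVec x) hbellman
    simp only [add_mulVec, dotProduct_add, smul_mulVec, dotProduct_smul,
      smul_eq_mul] at this
    have hKRK : x ⬝ᵥ (Kᵀ * R * K).mulVec x = r := by
      rw [hr, hKx]; exact dot_tmul K R K x x
    have hFPF : x ⬝ᵥ (Fᵀ * Pγ * F).mulVec x = f := by
      rw [hf, hFx]; exact dot_tmul F Pγ F x x
    rw [hKRK, hFPF] at this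
    linarith [this]
  -- LMI in scalar form
  have hlmi' : s0f - s0x + s1 - ϖ * q - ϖ * r ≤ 0 := by
    have h := hlmi.dotProduct_mulVec_nonneg (Sum.elim x Kx)
    rw [neg_mulVec, dotProduct_neg, fromBlocks_mulVec] at h
    simp only [star_trivial, Sum.elim_comp_inl, Sum.elim_comp_inr,
      sumElim_dotProduct_sumElim, dotProduct_add, sub_mulVec, add_mulVec,
      dotProduct_sub, smul_mulVec, dotProduct_smul, smul_eq_mul] at h
    have h' := h
    have e1 : x ⬝ᵥ (Aᵀ * S₀ * A).mulVec x = Ax ⬝ᵥ S₀.mulVec Ax := dot_tmul A S₀ A x x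
    have e2 : x ⬝ᵥ (Aᵀ * S₀ * B).mulVec Kx = Ax ⬝ᵥ S₀.mulVec (B.mulVec Kx) :=
      dot_tmul A S₀ B x Kx
    have e3 : Kx ⬝ᵥ (Bᵀ * S₀ * A).mulVec x = B.mulVec Kx ⬝ᵥ S₀.mulVec Ax :=
      dot_tmul B S₀ A Kx x
    have e4 : Kx ⬝ᵥ (Bᵀ * S₀ * B).mulVec Kx = B.mulVec Kx ⬝ᵥ S₀.mulVec (B.mulVec Kx) :=
      dot_tmul B S₀ B Kx Kx
    have e5 : s0f = Ax ⬝ᵥ S₀.mulVec Ax + Ax ⬝ᵥ S₀.mulVec (B.mulVec Kx)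
        + B.mulVec Kx ⬝ᵥ S₀.mulVec Ax + B.mulVec Kx ⬝ᵥ S₀.mulVec (B.mulVec Kx) := by
      rw [hs0f, hFxdef]
      simp [mulVec_add, dotProduct_add, add_dotProduct]
      ring
    rw [e1, e2, e3, e4] at h'
    rw [e5]
    linarith [h']
  -- PD in scalar form
  have hpd' : 0 < (1 / ϖ) * s1 - (1 / γ - 1) * a := by
    have h := hpd.dotProduct_mulVec_pos hx
    simp only [star_trivial, sub_mulVec, smul_mulVec, dotProduct_sub,
      dotProduct_smul, smul_eq_mul] at h
    linarith [h]
  have hq0 : 0 ≤ q := by simpa using hQ.dotProduct_mulVec_nonneg x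
  have hr0 : 0 ≤ r := by simpa using hR.dotProduct_mulVec_nonneg Kx
  -- goal in scalar form
  have hgoal : Fx ⬝ᵥ (Pγ + (1 / ϖ) • S₀).mulVec Fx
      - x ⬝ᵥ (Pγ + (1 / ϖ) • S₀).mulVec x
      = f + (1 / ϖ) * s0f - (a + (1 / ϖ) * s0x) := by
    simp only [add_mulVec, dotProduct_add, smul_mulVec, dotProduct_smul,
      smul_eq_mul]
    rfl
  rw [hgoal]
  have hγϖ : 0 < γ * ϖ := mul_pos hγ0 hϖ
  have key : γ * ϖ * (f + (1 / ϖ) * s0f - (a + (1 / ϖ) * s0x)) < 0 := by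
    have h1 : γ * ϖ * f = ϖ * (a - q - r) := by
      linear_combination (-ϖ) * hbell
    have h2 : γ * (s0f - s0x) ≤ γ * (ϖ * q + ϖ * r - s1) := by
      apply mul_le_mul_of_nonneg_left _ (le_of_lt hγ0)
      linarith
    have h3 : ϖ * (1 - γ) * a < γ * s1 := by
      have := mul_lt_mul_of_pos_left hpd' (mul_pos hγ0 hϖ)
      field_simp at this
      nlinarith [this, hγ0, hϖ]
    have h4 : 0 ≤ ϖ * (1 - γ) * (q + r) := by
      apply mul_nonneg (mul_nonneg (le_of_lt hϖ) (by linarith)) (by linarith)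
    have expand : γ * ϖ * (f + (1 / ϖ) * s0f - (a + (1 / ϖ) * s0x))
        = γ * ϖ * f + γ * s0f - γ * ϖ * a - γ * s0x := by
      field_simp
      ring
    rw [expand, h1]
    nlinarith [h2, h3, h4]
  nlinarith [key, hγϖ]
end

section
/- Let f : ℝⁿ → ℝⁿ be continuous with f(0) = 0, and let V : ℝⁿ → ℝ be continuous with V(0) = 0 and V(x) > 0 for all x ≠ 0. Let ρ > 0 and suppose the sublevel set S := {x ∈ ℝⁿ : V(x) ≤ ρ} is compact. Let ᾱ ∈ (0,1) and σ₁, σ₂ ≥ σ̲ > 0 with σ₁ + σ₂ ≥ 2, and suppose that for every x ∈ S: (1/2)·(σ₁·V(f(x)) + σ₂·V(f(f(x)))) ≤ (1−ᾱ)·V(x). Then: (i) for every x₀ ∈ S, the trajectory x_k = f^[k](x₀) converges to the origin as k → ∞, so S is contained in the region of attraction of the origin; and (ii) for every ε > 0 there exists δ > 0 such that every x₀ ∈ S with ‖x₀‖ < δ satisfies ‖f^[k](x₀)‖ < ε for all k ≥ 0. -/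
/-- (Theorem 5: sublevel set is an inner ROA approximation, M = 2.)
Let `f : ℝⁿ → ℝⁿ` be continuous with `f(0) = 0`, `V` continuous and positive definite,
`ρ > 0` with compact sublevel set `S = {x : V(x) ≤ ρ}`, `ᾱ ∈ (0,1)`, and
`σ₁, σ₂ ≥ σ̲ > 0` with `σ₁ + σ₂ ≥ 2`.  If the generalized two-step decrease
`(1/2)·(σ₁·V(f(x)) + σ₂·V(f(f(x)))) ≤ (1−ᾱ)·V(x)` holds for every `x ∈ S`, then:
(i) for every `x₀ ∈ S` the trajectory `f^[k](x₀)` converges to the origin (so `S` is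
contained in the region of attraction), and (ii) for every `ε > 0` there is `δ > 0`
such that every `x₀ ∈ S` with `‖x₀‖ < δ` satisfies `‖f^[k](x₀)‖ < ε` for all `k`. -/
theorem sublevel_inner_roa_approximation
    (n : ℕ) (f : EuclideanSpace ℝ (Fin n) → EuclideanSpace ℝ (Fin n))
    (hfcont : Continuous f) (hf0 : f 0 = 0)
    (V : EuclideanSpace ℝ (Fin n) → ℝ) (hVcont : Continuous V)
    (hV0 : V 0 = 0) (hVpos : ∀ x, x ≠ 0 → 0 < V x)
    (ρ : ℝ) (hρ : 0 < ρ)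
    (hScompact : IsCompact {x : EuclideanSpace ℝ (Fin n) | V x ≤ ρ})
    (αbar : ℝ) (hα0 : 0 < αbar) (hα1 : αbar < 1)
    (σ₁ σ₂ σlow : ℝ) (hσlow : 0 < σlow) (hσ₁ : σlow ≤ σ₁) (hσ₂ : σlow ≤ σ₂)
    (hσsum : 2 ≤ σ₁ + σ₂)
    (hdec : ∀ x, V x ≤ ρ →
      (1 / 2 : ℝ) * (σ₁ * V (f x) + σ₂ * V (f (f x))) ≤ (1 - αbar) * V x) :
    (∀ x₀, V x₀ ≤ ρ →
      Filter.Tendsto (fun k => f^[k] x₀) Filter.atTop (nhds 0)) ∧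
    (∀ ε > (0 : ℝ), ∃ δ > (0 : ℝ), ∀ x₀, V x₀ ≤ ρ → ‖x₀‖ < δ →
      ∀ k, ‖f^[k] x₀‖ < ε) := by
  have hVnn : ∀ x, 0 ≤ V x := fun x => by
    rcases eq_or_ne x 0 with h | h
    · simp [h, hV0]
    · exact (hVpos x h).le
  have hσ₁0 : 0 < σ₁ := lt_of_lt_of_le hσlow hσ₁
  have hσ₂0 : 0 < σ₂ := lt_of_lt_of_le hσlow hσ₂
  set a : ℝ := 1 - αbar with ha_def
  have ha0 : 0 ≤ a := by simp only [ha_def]; linarith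
  have ha1 : a < 1 := by simp only [ha_def]; linarith
  set C : ℝ := max 1 (2 * a / σ₁) with hC_def
  have hC1 : (1 : ℝ) ≤ C := le_max_left _ _
  have hC0 : (0 : ℝ) < C := lt_of_lt_of_le one_pos hC1
  -- key step: from any point of S, one of the next two points has V reduced by factor a
  have hstep : ∀ y, V y ≤ ρ →
      V (f y) ≤ a * V y ∨ V (f (f y)) ≤ a * V y := by
    intro y hy
    by_contra hcon
    push_neg at hcon
    obtain ⟨h1, h2⟩ := hcon
    have hd := hdec y hy
    have hav : (0:ℝ) ≤ a * V y := mul_nonneg ha0 (hVnn y)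
    nlinarith [mul_lt_mul_of_pos_left h1 hσ₁0, mul_lt_mul_of_pos_left h2 hσ₂0]
  -- master bound along trajectories
  have key : ∀ x₀, V x₀ ≤ ρ → ∀ k : ℕ, ∃ j : ℕ,
      k ≤ 2 * j + 1 ∧ V (f^[k] x₀) ≤ C * (a ^ j * V x₀) := by
    intro x₀ hx₀
    set K : ℕ → ℕ := fun j => Nat.rec 0
      (fun _ kj => if V (f^[kj + 1] x₀) ≤ a * V (f^[kj] x₀) then kj + 1 else kj + 2) j
      with hK_def
    have hKsucc : ∀ j, K (j+1) =
        if V (f^[K j + 1] x₀) ≤ a * V (f^[K j] x₀) then K j + 1 else K j + 2 :=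
      fun j => rfl
    have hmain : ∀ j, V (f^[K j] x₀) ≤ a ^ j * V x₀ ∧ K j ≤ 2 * j := by
      intro j
      induction j with
      | zero =>
        refine ⟨?_, Nat.le_refl 0⟩
        show V (f^[0] x₀) ≤ a ^ 0 * V x₀
        simp
      | succ j ih =>
        obtain ⟨hV, hKle⟩ := ih
        have haj1 : a ^ j ≤ 1 := pow_le_one₀ ha0 ha1.le
        have hVx0 : 0 ≤ V x₀ := hVnn x₀
        have hVj : V (f^[K j] x₀) ≤ ρ := by nlinarith
        have hs := hstep (f^[K j] x₀) hVj
        rw [hKsucc j]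
        by_cases hif : V (f^[K j + 1] x₀) ≤ a * V (f^[K j] x₀)
        · rw [if_pos hif]
          refine ⟨?_, by omega⟩
          calc V (f^[K j + 1] x₀) ≤ a * V (f^[K j] x₀) := hif
            _ ≤ a * (a ^ j * V x₀) := mul_le_mul_of_nonneg_left hV ha0
            _ = a ^ (j+1) * V x₀ := by ring
        · rw [if_neg hif]
          have h2 : V (f (f (f^[K j] x₀))) ≤ a * V (f^[K j] x₀) := by
            rcases hs with h | h
            · exfalso; apply hif; rw [Function.iterate_succ_apply']; exact h
            · exact h
          refine ⟨?_, by omega⟩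
          have hit : f^[K j + 2] x₀ = f (f (f^[K j] x₀)) := by
            rw [show K j + 2 = (K j + 1) + 1 from rfl, Function.iterate_succ_apply',
              Function.iterate_succ_apply']
          rw [hit]
          calc V (f (f (f^[K j] x₀))) ≤ a * V (f^[K j] x₀) := h2
            _ ≤ a * (a ^ j * V x₀) := mul_le_mul_of_nonneg_left hV ha0
            _ = a ^ (j+1) * V x₀ := by ring
    have hnext : ∀ j, V (f^[K j + 1] x₀) ≤ C * (a ^ j * V x₀) := by
      intro j
      obtain ⟨hV, _⟩ := hmain j
      have haj1 : a ^ j ≤ 1 := pow_le_one₀ ha0 ha1.le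
      have hVx0 : 0 ≤ V x₀ := hVnn x₀
      have hVj : V (f^[K j] x₀) ≤ ρ := by nlinarith
      have hd := hdec _ hVj
      have h1 : V (f^[K j + 1] x₀) ≤ (2 * a / σ₁) * V (f^[K j] x₀) := by
        rw [Function.iterate_succ_apply', div_mul_eq_mul_div, le_div_iff₀ hσ₁0]
        nlinarith [mul_nonneg hσ₂0.le (hVnn (f (f (f^[K j] x₀))))]
      have h2a : (0:ℝ) ≤ 2 * a / σ₁ := div_nonneg (by linarith) hσ₁0.le
      have hajV : (0:ℝ) ≤ a ^ j * V x₀ := mul_nonneg (pow_nonneg ha0 j) hVx0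
      calc V (f^[K j + 1] x₀) ≤ (2*a/σ₁) * V (f^[K j] x₀) := h1
        _ ≤ (2*a/σ₁) * (a ^ j * V x₀) := mul_le_mul_of_nonneg_left hV h2a
        _ ≤ C * (a ^ j * V x₀) := mul_le_mul_of_nonneg_right (le_max_right _ _) hajV
    have hcover : ∀ k, ∃ j, K j ≤ k ∧ k ≤ K j + 1 := by
      intro k
      induction k with
      | zero => exact ⟨0, by simp [hK_def], by simp [hK_def]⟩
      | succ k ih =>
        obtain ⟨j, h1, h2⟩ := ih
        rcases Nat.lt_or_ge k (K j + 1) with h | h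
        · exact ⟨j, by omega, by omega⟩
        · refine ⟨j+1, ?_, ?_⟩ <;>
          · rw [hKsucc j]; split <;> omega
    intro k
    obtain ⟨j, hj1, hj2⟩ := hcover k
    obtain ⟨hV, hK2⟩ := hmain j
    refine ⟨j, by omega, ?_⟩
    rcases Nat.eq_or_lt_of_le hj1 with heq | hlt
    · rw [← heq]
      have hajV : (0:ℝ) ≤ a ^ j * V x₀ := mul_nonneg (pow_nonneg ha0 j) (hVnn x₀)
      nlinarith
    · have hk : k = K j + 1 := by omega
      rw [hk]
      exact hnext j
  -- V along trajectories tends to 0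
  have hVtend : ∀ x₀, V x₀ ≤ ρ →
      Filter.Tendsto (fun k => V (f^[k] x₀)) Filter.atTop (nhds 0) := by
    intro x₀ hx₀
    rw [Metric.tendsto_atTop]
    intro ε hε
    have htend : Filter.Tendsto (fun j : ℕ => C * V x₀ * a ^ j)
        Filter.atTop (nhds 0) := by
      simpa using (tendsto_pow_atTop_nhds_zero_of_lt_one ha0 ha1).const_mul (C * V x₀)
    obtain ⟨J, hJ⟩ := Metric.tendsto_atTop.mp htend ε hε
    refine ⟨2 * J + 1, fun k hk => ?_⟩
    obtain ⟨j, hj1, hj2⟩ := key x₀ hx₀ k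
    have hjJ : J ≤ j := by omega
    have hdJ := hJ j hjJ
    rw [Real.dist_eq, sub_zero] at hdJ
    have hnn : (0:ℝ) ≤ C * V x₀ * a ^ j :=
      mul_nonneg (mul_nonneg hC0.le (hVnn x₀)) (pow_nonneg ha0 j)
    rw [abs_of_nonneg hnn] at hdJ
    rw [Real.dist_eq, sub_zero, abs_of_nonneg (hVnn _)]
    have hcomm : C * (a ^ j * V x₀) = C * V x₀ * a ^ j := by ring
    linarith [hj2, hcomm]
  -- small V implies small norm
  have hsmall : ∀ ε : ℝ, 0 < ε → ∃ η : ℝ, 0 < η ∧ ∀ y, V y < η → ‖y‖ < ε := by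
    intro ε hε
    have hTcomp : IsCompact ({y : EuclideanSpace ℝ (Fin n) | V y ≤ ρ} ∩
        {y | ε ≤ ‖y‖}) :=
      hScompact.inter_right (isClosed_le continuous_const continuous_norm)
    rcases ({y : EuclideanSpace ℝ (Fin n) | V y ≤ ρ} ∩
        {y | ε ≤ ‖y‖}).eq_empty_or_nonempty with hTe | hTne
    · refine ⟨ρ, hρ, fun y hy => ?_⟩
      by_contra hcon
      push_neg at hcon
      have hmem : y ∈ ({y : EuclideanSpace ℝ (Fin n) | V y ≤ ρ} ∩ {y | ε ≤ ‖y‖}) :=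
        ⟨hy.le, hcon⟩
      rw [hTe] at hmem
      exact hmem
    · obtain ⟨z, hzT, hzmin⟩ := hTcomp.exists_isMinOn hTne hVcont.continuousOn
      have hz0 : z ≠ 0 := by
        intro h
        have h2 : ε ≤ ‖z‖ := hzT.2
        rw [h] at h2
        simp at h2
        linarith
      have hm : 0 < V z := hVpos z hz0
      refine ⟨min (V z) ρ, lt_min hm hρ, fun y hy => ?_⟩
      by_contra hcon
      push_neg at hcon
      have hyT : y ∈ ({y : EuclideanSpace ℝ (Fin n) | V y ≤ ρ} ∩ {y | ε ≤ ‖y‖}) :=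
        ⟨(hy.trans_le (min_le_right _ _)).le, hcon⟩
      have h1 : V z ≤ V y := isMinOn_iff.mp hzmin y hyT
      have h2 : V y < V z := hy.trans_le (min_le_left _ _)
      linarith
  constructor
  · intro x₀ hx₀
    rw [Metric.tendsto_atTop]
    intro ε hε
    obtain ⟨η, hη0, hball⟩ := hsmall ε hε
    obtain ⟨N, hN⟩ := Metric.tendsto_atTop.mp (hVtend x₀ hx₀) η hη0
    refine ⟨N, fun k hk => ?_⟩
    have hd := hN k hk
    rw [Real.dist_eq, sub_zero, abs_of_nonneg (hVnn _)] at hd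
    have := hball _ hd
    rwa [dist_zero_right]
  · intro ε hε
    obtain ⟨η, hη0, hball⟩ := hsmall ε hε
    have hηC : 0 < η / C := div_pos hη0 hC0
    obtain ⟨δ, hδ0, hδ⟩ :=
      Metric.continuousAt_iff.mp (hVcont.continuousAt (x := 0)) (η / C) hηC
    refine ⟨δ, hδ0, fun x₀ hx₀ hx₀δ k => ?_⟩
    have hVx₀ : V x₀ < η / C := by
      have h1 := hδ (show dist x₀ 0 < δ by rwa [dist_zero_right])
      rw [Real.dist_eq, hV0, sub_zero] at h1
      exact (le_abs_self _).trans_lt h1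
    obtain ⟨j, _, hb⟩ := key x₀ hx₀ k
    have haj : a ^ j ≤ 1 := pow_le_one₀ ha0 ha1.le
    have hin : a ^ j * V x₀ ≤ V x₀ := by
      calc a ^ j * V x₀ ≤ 1 * V x₀ := mul_le_mul_of_nonneg_right haj (hVnn x₀)
        _ = V x₀ := one_mul _
    have h1 : C * (a ^ j * V x₀) ≤ C * V x₀ := mul_le_mul_of_nonneg_left hin hC0.le
    have h2 : V x₀ * C < η := (lt_div_iff₀ hC0).mp hVx₀
    have h3 : V (f^[k] x₀) < η := by linarith [mul_comm C (V x₀)]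
    exact hball _ h3
end

section
/- For γ ∈ (0,1), define s(γ) := √((5γ−1)² + 4γ) and K(γ) := −2·(1 + 2/(5γ−1 + s(γ)))⁻¹. Then 5γ−1 + s(γ) > 0, and |2 + K(γ)| < 1 if and only if γ > 1/3. -/
/-- (Scalar discounted LQR example.)  For `γ ∈ (0,1)`, with
`s(γ) := √((5γ−1)² + 4γ)` and `K(γ) := −2·(1 + 2/(5γ−1 + s(γ)))⁻¹`, one has
`5γ−1 + s(γ) > 0`, and `|2 + K(γ)| < 1` if and only if `γ > 1/3`. -/
theorem scalar_lqr_stability_threshold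
    (γ : ℝ) (hγ0 : 0 < γ) (hγ1 : γ < 1)
    (s : ℝ) (hs : s = Real.sqrt ((5 * γ - 1) ^ 2 + 4 * γ))
    (K : ℝ) (hK : K = -2 * (1 + 2 / (5 * γ - 1 + s))⁻¹) :
    0 < 5 * γ - 1 + s ∧ (|2 + K| < 1 ↔ γ > 1 / 3) := by
  set a : ℝ := 5 * γ - 1 with ha
  have hs0 : 0 ≤ s := by rw [hs]; exact Real.sqrt_nonneg _
  have hsq : s ^ 2 = a ^ 2 + 4 * γ := by
    rw [hs]; exact Real.sq_sqrt (by positivity)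
  have habs : |a| < s := by
    rw [hs, ← Real.sqrt_sq_eq_abs]
    exact Real.sqrt_lt_sqrt (sq_nonneg a) (by linarith)
  have hpos : 0 < a + s := by
    have := neg_abs_le a
    have := neg_lt_of_abs_lt habs
    linarith
  have hden : 0 < a + s + 2 := by linarith
  have hF : 2 + K = 4 / (a + s + 2) := by
    rw [hK]
    field_simp
    ring
  refine ⟨hpos, ?_⟩
  rw [hF, abs_of_pos (by positivity), div_lt_one hden]
  constructor
  · intro h
    by_contra hc
    push_neg at hc
    have h1 : 0 < s - (2 - a) := by linarith
    have h2 : 0 < s + (2 - a) := by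
      have : 0 < 2 - a := by rw [ha]; linarith
      linarith
    nlinarith [mul_pos h1 h2]
  · intro h
    by_contra hc
    push_neg at hc
    have h1 : s ≤ 2 - a := by linarith
    have h2 : 0 ≤ 2 - a := le_trans hs0 h1
    nlinarith [mul_le_mul h1 h1 hs0 h2]
end
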